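/- For every c ∈ ℝ, every θ ∈ ℝ, and every sign σ ∈ {+1, −1}, the integrand s ↦ (c sin(s + θ) − σ·2 arctan(sinh s))·sech s is integrable on ℝ and ∫_{−∞}^{∞} (c sin(s + θ) − σ·2 arctan(sinh s)) sech s ds = c π sech(π/2) sin θ. -/

import Mathlib

open MeasureTheory Set Complex

lemma sech_le (s : ℝ) : (Real.cosh s)⁻¹ ≤ 2 * Real.exp (-|s|) := by
  rw [← Real.cosh_abs, Real.cosh_eq, inv_le_iff_one_le_mul₀ (by positivity), Real.exp_neg]
  have h1 := Real.exp_pos |s|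
  have h3 : (Real.exp |s|)⁻¹ * Real.exp |s| = 1 := inv_mul_cancel₀ h1.ne'
  nlinarith [inv_pos.mpr h1]

lemma integrable_exp_neg_abs2 : Integrable (fun s : ℝ => Real.exp (-|s|)) := by
  have hIoi : IntegrableOn (fun s : ℝ => Real.exp (-|s|)) (Ioi 0) := by
    apply (exp_neg_integrableOn_Ioi 0 one_pos).congr_fun
    · intro x hx; simp [abs_of_pos (mem_Ioi.mp hx)]
    · exact measurableSet_Ioi
  have hIic : IntegrableOn (fun s : ℝ => Real.exp (-|s|)) (Iic 0) := by
    rw [IntegrableOn, ← Measure.map_neg_eq_self (volume : Measure ℝ)]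
    have m : MeasurableEmbedding fun x : ℝ => -x := (Homeomorph.neg ℝ).measurableEmbedding
    rw [Measure.restrict_map m.measurable measurableSet_Iic, m.integrable_map_iff]
    simp_rw [Function.comp_def, abs_neg, neg_preimage, neg_Iic, neg_zero]
    exact (integrableOn_Ici_iff_integrableOn_Ioi).mpr hIoi
  have h := hIic.union hIoi
  rwa [Iic_union_Ioi, integrableOn_univ] at h

lemma integral_odd0 {f : ℝ → ℝ} (h : ∀ x, f (-x) = - f x) : ∫ x, f x = 0 := by
  have h1 : ∫ x, f (-x) = ∫ x, f x := integral_neg_eq_self f volume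
  simp_rw [h, integral_neg] at h1
  linarith

lemma beta_eval : Complex.betaIntegral ((1+I)/2) ((1-I)/2) =
    (Real.pi : ℂ) * ((Real.cosh (Real.pi/2) : ℝ) : ℂ)⁻¹ := by
  have hu : 0 < ((1+I)/2 : ℂ).re := by simp [Complex.div_re]
  have hv : 0 < ((1-I)/2 : ℂ).re := by simp [Complex.div_re]
  have h := Complex.Gamma_mul_Gamma_eq_betaIntegral hu hv
  have hsum : ((1+I)/2 : ℂ) + (1-I)/2 = 1 := by ring
  rw [hsum, Complex.Gamma_one, one_mul] at h
  have h2 := Complex.Gamma_mul_Gamma_one_sub ((1+I)/2)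
  have hv' : (1 : ℂ) - (1+I)/2 = (1-I)/2 := by ring
  rw [hv'] at h2
  rw [← h, h2]
  have hsin : Complex.sin ((Real.pi : ℂ) * ((1+I)/2)) = ((Real.cosh (Real.pi/2) : ℝ) : ℂ) := by
    have : (Real.pi : ℂ) * ((1+I)/2) = (Real.pi/2 : ℂ) + ((Real.pi/2 : ℂ)) * I := by ring
    rw [this, Complex.sin_add, Complex.cos_mul_I, Complex.sin_mul_I]
    have hc : Complex.sin ((Real.pi/2 : ℝ) : ℂ) = 1 := by
      rw [← Complex.ofReal_sin]; norm_num
    have hc2 : Complex.cos ((Real.pi/2 : ℝ) : ℂ) = 0 := by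
      rw [← Complex.ofReal_cos]; norm_num
    push_cast at hc hc2 ⊢
    rw [hc, hc2]
    ring
  rw [hsin, div_eq_mul_inv]

noncomputable def psi (x : ℝ) : ℝ := (Real.log x - Real.log (1 - x)) / 2

lemma psi_hasDeriv {x : ℝ} (hx : x ∈ Ioo (0:ℝ) 1) :
    HasDerivAt psi ((2*(x*(1-x)))⁻¹) x := by
  obtain ⟨h0, h1⟩ := hx
  have hd1 : HasDerivAt Real.log x⁻¹ x := Real.hasDerivAt_log h0.ne'
  have hd2 : HasDerivAt (fun y : ℝ => Real.log (1 - y)) (-(1-x)⁻¹) x := by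
    have := (Real.hasDerivAt_log (by linarith : (1:ℝ) - x ≠ 0)).comp x
      ((hasDerivAt_id x).const_sub 1)
    exact this.congr_deriv (by ring)
  have := (hd1.sub hd2).div_const 2
  refine HasDerivAt.congr_deriv (f := psi) this ?_
  have hx0 : x ≠ 0 := h0.ne'
  have hx1 : (1:ℝ)-x ≠ 0 := by linarith
  field_simp
  ring

lemma psi_image : psi '' Ioo (0:ℝ) 1 = univ := by
  apply eq_univ_of_forall
  intro t
  refine ⟨(1 + Real.exp (-(2*t)))⁻¹, ⟨by positivity, ?_⟩, ?_⟩
  · rw [inv_lt_one_iff₀]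
    right
    nlinarith [Real.exp_pos (-(2*t))]
  · have he := Real.exp_pos (-(2*t))
    have hd : (0:ℝ) < 1 + Real.exp (-(2*t)) := by linarith
    have h1x : 1 - (1 + Real.exp (-(2*t)))⁻¹ = Real.exp (-(2*t)) / (1 + Real.exp (-(2*t))) := by
      field_simp
      ring
    rw [psi, h1x, Real.log_inv, Real.log_div he.ne' hd.ne', Real.log_exp]
    ring

lemma psi_injOn : InjOn psi (Ioo (0:ℝ) 1) := by
  apply StrictMonoOn.injOn
  intro a ha b hb hab
  have h1 : Real.log a < Real.log b := Real.log_lt_log ha.1 hab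
  have h2 : Real.log (1-b) < Real.log (1-a) := Real.log_lt_log (by linarith [hb.2]) (by linarith)
  simp only [psi]
  linarith

lemma pointwise_eq {x : ℝ} (hx : x ∈ Ioo (0:ℝ) 1) :
    |(2*(x*(1-x)))⁻¹| • (Complex.exp ((psi x : ℂ) * I) * ((Real.cosh (psi x))⁻¹ : ℝ)) =
      (x:ℂ) ^ ((1+I)/2 - 1) * ((1:ℂ) - x) ^ ((1-I)/2 - 1) := by
  obtain ⟨h0, h1⟩ := hx
  set a := Real.log x with ha
  set b := Real.log (1 - x) with hb
  have hxa : Real.exp a = x := Real.exp_log h0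
  have hxb : Real.exp b = 1 - x := Real.exp_log (by linarith)
  have hx0 : x ≠ 0 := h0.ne'
  have hx1 : (1:ℝ) - x ≠ 0 := by linarith
  -- sech formula
  have hpsi : psi x = (a-b)/2 := by rw [psi]
  have hsech : (Real.cosh (psi x))⁻¹ = 2 * Real.exp ((a-b)/2) * (1-x) := by
    rw [hpsi, Real.cosh_eq]
    have e1 : Real.exp ((a-b)/2) * Real.exp ((a-b)/2) * (1-x) = x := by
      rw [← Real.exp_add, show (a-b)/2 + (a-b)/2 = a - b by ring, Real.exp_sub, hxa, hxb]
      field_simp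
    have e2 : Real.exp (-((a-b)/2)) * Real.exp ((a-b)/2) = 1 := by
      rw [← Real.exp_add]; simp
    exact inv_eq_of_mul_eq_one_right (by nlinarith)
  have hreal : (2*(x*(1-x)))⁻¹ * (2 * Real.exp ((a-b)/2) * (1-x)) = Real.exp (-(a+b)/2) := by
    rw [show -(a+b)/2 = (a-b)/2 - a by ring, Real.exp_sub, hxa]
    field_simp
  have habs : |(2*(x*(1-x)))⁻¹| = (2*(x*(1-x)))⁻¹ := by
    have h2 : (0:ℝ) < 1 - x := by linarith
    exact abs_of_pos (by positivity)
  rw [habs]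
  calc ((2*(x*(1-x)))⁻¹ : ℝ) • (Complex.exp ((psi x : ℂ) * I) * ((Real.cosh (psi x))⁻¹ : ℝ))
      = Complex.exp ((psi x : ℂ) * I) *
          (((2*(x*(1-x)))⁻¹ * (2 * Real.exp ((a-b)/2) * (1-x)) : ℝ) : ℂ) := by
        rw [hsech, real_smul]
        push_cast
        ring
    _ = Complex.exp ((psi x : ℂ) * I + ((-(a+b)/2 : ℝ) : ℂ)) := by
        rw [hreal, Complex.ofReal_exp, Complex.exp_add]
    _ = Complex.exp (((1+I)/2 - 1) * (a:ℂ) + ((1-I)/2 - 1) * (b:ℂ)) := by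
        congr 1
        rw [psi]
        push_cast
        ring
    _ = (x:ℂ) ^ ((1+I)/2 - 1) * ((1:ℂ) - x) ^ ((1-I)/2 - 1) := by
        rw [Complex.exp_add,
          Complex.cpow_def_of_ne_zero (by exact_mod_cast hx0),
          Complex.cpow_def_of_ne_zero (by
            rw [show (1:ℂ) - (x:ℂ) = ((1-x : ℝ) : ℂ) by push_cast; ring]
            exact_mod_cast hx1)]
        rw [show (1:ℂ) - (x:ℂ) = ((1-x : ℝ) : ℂ) by push_cast; ring,
          ← Complex.ofReal_log h0.le, ← Complex.ofReal_log (by linarith : (0:ℝ) ≤ 1-x)]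
        ring_nf
        rw [← ha, ← hb]

lemma cov : ∫ t : ℝ, Complex.exp ((t:ℂ) * I) * (((Real.cosh t)⁻¹ : ℝ) : ℂ) =
    Complex.betaIntegral ((1+I)/2) ((1-I)/2) := by
  rw [Complex.betaIntegral, intervalIntegral.integral_of_le zero_le_one,
    integral_Ioc_eq_integral_Ioo]
  have himg := integral_image_eq_integral_abs_deriv_smul measurableSet_Ioo
    (fun x hx => (psi_hasDeriv hx).hasDerivWithinAt) psi_injOn
    (fun t => Complex.exp ((t:ℂ) * I) * (((Real.cosh t)⁻¹ : ℝ) : ℂ))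
  rw [psi_image, setIntegral_univ] at himg
  rw [himg]
  exact setIntegral_congr_fun measurableSet_Ioo (fun x hx => pointwise_eq hx)


lemma integrable_aux {f : ℝ → ℝ} (hf : Continuous f) (C : ℝ) (hC : ∀ s, |f s| ≤ C) :
    Integrable (fun s => f s * (Real.cosh s)⁻¹) := by
  apply Integrable.mono' (integrable_exp_neg_abs2.const_mul (C * 2))
  · exact (hf.mul (Real.continuous_cosh.inv₀ (fun x => (Real.cosh_pos x).ne'))).aestronglyMeasurable
  · refine Filter.Eventually.of_forall (fun s => ?_)
    have h0 : (0:ℝ) ≤ C := le_trans (abs_nonneg _) (hC 0)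
    have h1 : (0:ℝ) < Real.cosh s := Real.cosh_pos s
    calc ‖f s * (Real.cosh s)⁻¹‖ = |f s| * (Real.cosh s)⁻¹ := by
          rw [norm_mul, Real.norm_eq_abs, Real.norm_eq_abs, abs_of_pos (inv_pos.mpr h1)]
      _ ≤ C * (2 * Real.exp (-|s|)) :=
          mul_le_mul (hC s) (sech_le s) (inv_pos.mpr h1).le h0
      _ = C * 2 * Real.exp (-|s|) := by ring

lemma integrable_g :
    Integrable (fun t : ℝ => Complex.exp ((t:ℂ) * I) * (((Real.cosh t)⁻¹ : ℝ) : ℂ)) := by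
  apply Integrable.mono' (integrable_exp_neg_abs2.const_mul 2)
  · apply Continuous.aestronglyMeasurable
    exact (Complex.continuous_exp.comp (Complex.continuous_ofReal.mul continuous_const)).mul
      (Complex.continuous_ofReal.comp
        (Real.continuous_cosh.inv₀ (fun x => (Real.cosh_pos x).ne')))
  · refine Filter.Eventually.of_forall (fun s => ?_)
    have h1 : (0:ℝ) < Real.cosh s := Real.cosh_pos s
    calc ‖Complex.exp ((s:ℂ) * I) * (((Real.cosh s)⁻¹ : ℝ) : ℂ)‖
        = ‖Complex.exp ((s:ℂ) * I)‖ * ‖(((Real.cosh s)⁻¹ : ℝ) : ℂ)‖ := norm_mul _ _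
      _ = (Real.cosh s)⁻¹ := by
          have hre : ((s:ℂ) * I).re = 0 := by simp
          rw [Complex.norm_exp, hre, Real.exp_zero, Complex.norm_real,
            Real.norm_eq_abs, one_mul, abs_of_pos (inv_pos.mpr h1)]
      _ ≤ 2 * Real.exp (-|s|) := sech_le s

lemma key : ∫ t : ℝ, Real.cos t * (Real.cosh t)⁻¹ = Real.pi * (Real.cosh (Real.pi/2))⁻¹ := by
  have h := integral_re integrable_g
  rw [cov, beta_eval] at h
  simp_rw [RCLike.re_to_complex] at h
  have hL : ∀ t : ℝ, (Complex.exp ((t:ℂ) * I) * (((Real.cosh t)⁻¹ : ℝ) : ℂ)).re =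
      Real.cos t * (Real.cosh t)⁻¹ := by
    intro t
    rw [Complex.mul_re, Complex.ofReal_re, Complex.ofReal_im, mul_zero, sub_zero,
      Complex.exp_ofReal_mul_I_re]
  simp_rw [hL] at h
  rw [h, show ((Real.pi:ℂ) * (((Real.cosh (Real.pi/2) : ℝ)):ℂ)⁻¹) =
    (((Real.pi * (Real.cosh (Real.pi/2))⁻¹ : ℝ)) : ℂ) by push_cast; ring]
  exact Complex.ofReal_re _

/-- For every `c ∈ ℝ`, `θ ∈ ℝ` and sign `σ ∈ {+1, −1}`, the function
`s ↦ (c sin(s + θ) − σ·2 arctan(sinh s))·sech s` is integrable on `ℝ` and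
`∫_{−∞}^{∞} (c sin(s + θ) − σ·2 arctan(sinh s)) sech s ds = c π sech(π/2) sin θ`. -/
theorem stmt14 (c θ σ : ℝ) (hσ : σ = 1 ∨ σ = -1) :
    Integrable (fun s : ℝ =>
      (c * Real.sin (s + θ) - σ * (2 * Real.arctan (Real.sinh s))) * (Real.cosh s)⁻¹) ∧
    ∫ s : ℝ, (c * Real.sin (s + θ) - σ * (2 * Real.arctan (Real.sinh s))) * (Real.cosh s)⁻¹ =
      c * Real.pi * (Real.cosh (Real.pi / 2))⁻¹ * Real.sin θ := by
  have habs_sin : ∀ s : ℝ, |Real.sin s| ≤ 1 := fun s => Real.abs_sin_le_one s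
  have habs_cos : ∀ s : ℝ, |Real.cos s| ≤ 1 := fun s => Real.abs_cos_le_one s
  have habs_atan : ∀ s : ℝ, |Real.arctan (Real.sinh s)| ≤ Real.pi / 2 := fun s =>
    by
    have h := Real.arctan_mem_Ioo (Real.sinh s)
    rw [abs_le]
    exact ⟨h.1.le, h.2.le⟩
  have h1 : Integrable (fun s : ℝ => Real.sin s * (Real.cosh s)⁻¹) :=
    integrable_aux Real.continuous_sin 1 habs_sin
  have h2 : Integrable (fun s : ℝ => Real.cos s * (Real.cosh s)⁻¹) :=
    integrable_aux Real.continuous_cos 1 habs_cos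
  have h3 : Integrable (fun s : ℝ => Real.arctan (Real.sinh s) * (Real.cosh s)⁻¹) :=
    integrable_aux (Real.continuous_arctan.comp Real.continuous_sinh) (Real.pi/2) habs_atan
  have hptw : ∀ s : ℝ,
      (c * Real.sin (s + θ) - σ * (2 * Real.arctan (Real.sinh s))) * (Real.cosh s)⁻¹ =
      (c * Real.cos θ) * (Real.sin s * (Real.cosh s)⁻¹)
        + (c * Real.sin θ) * (Real.cos s * (Real.cosh s)⁻¹)
        + (-(2*σ)) * (Real.arctan (Real.sinh s) * (Real.cosh s)⁻¹) := by
    intro s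
    rw [Real.sin_add]
    ring
  have hint : Integrable (fun s : ℝ =>
      (c * Real.cos θ) * (Real.sin s * (Real.cosh s)⁻¹)
        + (c * Real.sin θ) * (Real.cos s * (Real.cosh s)⁻¹)
        + (-(2*σ)) * (Real.arctan (Real.sinh s) * (Real.cosh s)⁻¹)) :=
    ((h1.const_mul _).add (h2.const_mul _)).add (h3.const_mul _)
  constructor
  · exact hint.congr (Filter.Eventually.of_forall (fun s => (hptw s).symm))
  · have heq : ∫ s : ℝ, (c * Real.sin (s + θ) - σ * (2 * Real.arctan (Real.sinh s)))
        * (Real.cosh s)⁻¹ = ∫ s : ℝ,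
        ((c * Real.cos θ) * (Real.sin s * (Real.cosh s)⁻¹)
        + (c * Real.sin θ) * (Real.cos s * (Real.cosh s)⁻¹)
        + (-(2*σ)) * (Real.arctan (Real.sinh s) * (Real.cosh s)⁻¹)) := by
      congr 1
      funext s
      exact hptw s
    have h12 : Integrable (fun s : ℝ => (c * Real.cos θ) * (Real.sin s * (Real.cosh s)⁻¹)
        + (c * Real.sin θ) * (Real.cos s * (Real.cosh s)⁻¹)) :=
      (h1.const_mul _).add (h2.const_mul _)
    rw [heq, integral_add h12 (h3.const_mul _),
      integral_add (h1.const_mul _) (h2.const_mul _),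
      integral_const_mul, integral_const_mul, integral_const_mul]
    have hodd1 : ∫ s : ℝ, Real.sin s * (Real.cosh s)⁻¹ = 0 := by
      apply integral_odd0
      intro x
      rw [Real.sin_neg, Real.cosh_neg]
      ring
    have hodd3 : ∫ s : ℝ, Real.arctan (Real.sinh s) * (Real.cosh s)⁻¹ = 0 := by
      apply integral_odd0
      intro x
      rw [Real.sinh_neg, Real.arctan_neg, Real.cosh_neg]
      ring
    rw [hodd1, hodd3, key]
    ring
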